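/- arXiv:1103.2617 — 6 statements merged into one kernel-verified Lean document; each statement's English description precedes it below -/
import Mathlib

section
/- Let q be an integer with either |q| = 2 or q = 4m+3 for some integer m, and let X = Δ_2 be the group of 2-adic integers. Then there exist independent identically distributed random variables ξ_1, ξ_2 with values in X whose common distribution μ is not an idempotent distribution (μ ∉ I(X)) such that the conditional distribution of the linear form L_2 = ξ_1 + qξ_2 given L_1 = ξ_1 + ξ_2 is symmetric. -/
open MeasureTheory ProbabilityTheory

noncomputable section

instance (p : ℕ) [Fact p.Prime] : MeasurableSpace ℤ_[p] := borel _
instance (p : ℕ) [Fact p.Prime] : BorelSpace ℤ_[p] := ⟨rfl⟩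

/-! ### Topological automorphisms, characters, characteristic functions, and
special classes of probability distributions on topological Abelian groups. -/

section LCA

variable {X : Type*} [AddCommGroup X] [TopologicalSpace X]

/-- `f : X → X` is a topological automorphism of the topological Abelian group `X`. -/
def IsTopAut (f : X → X) : Prop :=
  ∃ e : X ≃+ X, Continuous e ∧ Continuous e.symm ∧ ⇑e = f

/-- The character group (Pontryagin dual) `Y = X^*` of `X`: the group of continuous
characters `X → Circle`, written multiplicatively, with the compact-open topology. -/
abbrev CharGroup (X : Type*) [AddCommGroup X] [TopologicalSpace X] : Type _ :=
  PontryaginDual (Multiplicative X)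

/-- The value `(x, y)` of a character `y ∈ Y` at a point `x ∈ X`, as a complex number. -/
def charVal (y : CharGroup X) (x : X) : ℂ := (y (Multiplicative.ofAdd x) : ℂ)

/-- The adjoint `δ̃ : Y → Y` of a continuous endomorphism `δ` of `X`, defined by
`(x, δ̃ y) = (δ x, y)`. -/
def adjointChar (δ : ContinuousAddMonoidHom X X) (y : CharGroup X) : CharGroup X :=
  y.comp ⟨AddMonoidHom.toMultiplicative δ.toAddMonoidHom, δ.continuous_toFun⟩

variable [MeasurableSpace X]

open MeasureTheory in
/-- The characteristic function `μ̂(y) = ∫_X (x,y) dμ(x)` of a measure `μ` on `X`. -/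
def charFun (μ : Measure X) (y : CharGroup X) : ℂ := ∫ x, charVal y x ∂μ

open MeasureTheory in
/-- `ν` is the Haar distribution `m_K` of the compact subgroup `K` of `X`: a probability
measure giving full mass to `K` and invariant under translations by elements of `K`. -/
def IsHaarOn (K : AddSubgroup X) (ν : Measure X) : Prop :=
  IsProbabilityMeasure ν ∧ IsCompact (K : Set X) ∧ ν (K : Set X) = 1 ∧
    ∀ k ∈ K, Measure.map (fun x => k + x) ν = ν

open MeasureTheory in
/-- `μ ∈ I(X)`: `μ` is an idempotent distribution, i.e. a shift of the Haar
distribution `m_K` of some compact subgroup `K` of `X`. -/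
def IsIdempotentDist (μ : Measure X) : Prop :=
  ∃ (K : AddSubgroup X) (x : X) (ν : Measure X), IsHaarOn K ν ∧
    μ = Measure.map (fun z => x + z) ν

open MeasureTheory in
/-- The convolution `μ * ν` of two measures on `X`. -/
def mconv (μ ν : Measure X) : Measure X :=
  Measure.map (fun p : X × X => p.1 + p.2) (μ.prod ν)

open MeasureTheory in
/-- The support `σ(μ)` of a measure `μ` on `X`. -/
def msupport (μ : Measure X) : Set X := {x | ∀ U : Set X, IsOpen U → x ∈ U → 0 < μ U}

open MeasureTheory in
/-- The support of `μ` is contained in a coset of some proper closed subgroup of `X`. -/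
def SupportInProperCoset (μ : Measure X) : Prop :=
  ∃ (K : AddSubgroup X) (x : X), IsClosed (K : Set X) ∧ K ≠ ⊤ ∧
    msupport μ ⊆ (fun k => x + k) '' (K : Set X)

variable [IsTopologicalAddGroup X]

open MeasureTheory in
/-- `γ ∈ Γ(X)`: `γ` is a Gaussian distribution on `X`, i.e. a probability measure whose
characteristic function has the form `γ̂(y) = (x₀,y)·exp(−φ(y))`, where `φ` is a continuous
nonnegative function on the character group `Y` satisfying
`φ(u+v) + φ(u−v) = 2(φ(u) + φ(v))` (the character group is written multiplicatively). -/
def IsGaussian (γ : Measure X) : Prop :=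
  IsProbabilityMeasure γ ∧
  ∃ (x₀ : X) (φ : CharGroup X → ℝ), Continuous φ ∧ (∀ y, 0 ≤ φ y) ∧
    (∀ u v : CharGroup X, φ (u * v) + φ (u * v⁻¹) = 2 * (φ u + φ v)) ∧
    ∀ y : CharGroup X, charFun γ y = charVal y x₀ * Complex.exp (-(φ y : ℂ))

open MeasureTheory in
/-- `μ ∈ Γ(X)*I(X)`: `μ` is the convolution of a Gaussian distribution and an
idempotent distribution on `X`. -/
def IsGaussConvIdemp (μ : Measure X) : Prop :=
  ∃ γ ι : Measure X, IsGaussian γ ∧ IsIdempotentDist ι ∧ μ = mconv γ ι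

end LCA

open scoped ENNReal

namespace HeydeAux

def K₀ : TopologicalSpace.PositiveCompacts ℤ_[2] :=
  ⟨⟨Set.univ, isCompact_univ⟩, by simp⟩

def m : Measure ℤ_[2] := Measure.addHaarMeasure K₀

instance : IsProbabilityMeasure m := by
  constructor
  simpa [m, K₀] using Measure.addHaarMeasure_self (K₀ := K₀)

instance : m.IsAddLeftInvariant :=
  inferInstanceAs (Measure.addHaarMeasure K₀).IsAddLeftInvariant

lemma meas_dbl : Measurable (fun x : ℤ_[2] => 2 * x) :=
  (continuous_const.mul continuous_id).measurable

lemma meas_tr (a : ℤ_[2]) : Measurable (fun x : ℤ_[2] => a + x) :=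
  (continuous_const.add continuous_id).measurable

def m0 : Measure ℤ_[2] := m.map (fun x => 2 * x)

def m1 : Measure ℤ_[2] := m0.map (fun x => 1 + x)

instance : IsProbabilityMeasure m0 := Measure.isProbabilityMeasure_map meas_dbl.aemeasurable
instance : IsProbabilityMeasure m1 := Measure.isProbabilityMeasure_map (meas_tr 1).aemeasurable

/-- invariance of `m0` under translation by even elements -/
lemma m0_inv (t : ℤ_[2]) : m0.map (fun x => 2 * t + x) = m0 := by
  have h1 : m0.map (fun x => 2 * t + x) = m.map ((fun x => 2 * t + x) ∘ (fun x => 2 * x)) := by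
    rw [m0, Measure.map_map (meas_tr _) meas_dbl]
  have h2 : ((fun x : ℤ_[2] => 2 * t + x) ∘ (fun x => 2 * x)) =
      (fun x => 2 * x) ∘ (fun x => t + x) := by
    funext x; simp [Function.comp]; ring
  rw [h1, h2, ← Measure.map_map meas_dbl (meas_tr t),
    Measure.IsAddLeftInvariant.map_add_left_eq_self (μ := m) t]
  rfl


section smulprod
variable {α β : Type*} [MeasurableSpace α] [MeasurableSpace β]

lemma smul_prod' (c : ℝ≥0∞) (hc : c ≠ ⊤) (μ : Measure α) (ν : Measure β)
    [IsFiniteMeasure μ] [IsFiniteMeasure ν] :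
    (c • μ).prod ν = c • μ.prod ν := by
  haveI : IsFiniteMeasure (c • μ) := by
    constructor
    simp only [Measure.smul_apply, smul_eq_mul]
    exact ENNReal.mul_lt_top hc.lt_top (measure_lt_top μ _)
  refine Measure.prod_eq fun s t hs ht => ?_
  simp [Measure.prod_prod, mul_assoc]

lemma prod_smul' (c : ℝ≥0∞) (hc : c ≠ ⊤) (μ : Measure α) (ν : Measure β)
    [IsFiniteMeasure μ] [IsFiniteMeasure ν] :
    μ.prod (c • ν) = c • μ.prod ν := by
  haveI : IsFiniteMeasure (c • ν) := by
    constructor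
    simp only [Measure.smul_apply, smul_eq_mul]
    exact ENNReal.mul_lt_top hc.lt_top (measure_lt_top ν _)
  refine Measure.prod_eq fun s t hs ht => ?_
  simp [Measure.prod_prod]
  ring

end smulprod

/-! product space -/

abbrev Y := ℤ_[2] × ℤ_[2]

def K₀2 : TopologicalSpace.PositiveCompacts Y :=
  ⟨⟨Set.univ, isCompact_univ⟩, by simp⟩

def m2 : Measure Y := m.prod m

instance : IsProbabilityMeasure m2 := by
  unfold m2; infer_instance

lemma meas_tr2 (v : Y) : Measurable (fun p : Y => v + p) :=
  (continuous_const.add continuous_id).measurable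

lemma m2_inv (v : Y) : m2.map (fun p => v + p) = m2 := by
  have : (fun p : Y => v + p) = Prod.map (fun x => v.1 + x) (fun x => v.2 + x) := by
    funext p; simp [Prod.map, Prod.ext_iff]
  rw [m2, this, ← Measure.map_prod_map _ _ (meas_tr v.1) (meas_tr v.2),
    Measure.IsAddLeftInvariant.map_add_left_eq_self (μ := m) v.1,
    Measure.IsAddLeftInvariant.map_add_left_eq_self (μ := m) v.2]

instance : m2.IsAddLeftInvariant := ⟨m2_inv⟩

/-- pushforward of `m2` under a continuous additive involution is `m2`. -/
lemma m2_map_eq (f : Y → Y) (hfc : Continuous f)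
    (hfa : ∀ p r : Y, f (p + r) = f p + f r) (hff : ∀ p, f (f p) = p) :
    m2.map f = m2 := by
  have hfm : Measurable f := hfc.measurable
  haveI : IsProbabilityMeasure (m2.map f) := Measure.isProbabilityMeasure_map hfm.aemeasurable
  haveI : (m2.map f).IsAddLeftInvariant := by
    constructor
    intro v
    have h1 : (fun p : Y => v + p) ∘ f = f ∘ (fun p => f v + p) := by
      funext p; simp [Function.comp, hfa, hff]
    rw [Measure.map_map (meas_tr2 v) hfm, h1, ← Measure.map_map hfm (meas_tr2 (f v)),
      m2_inv]
  have h2 : m2 = m2 K₀2 • Measure.addHaarMeasure K₀2 :=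
    Measure.addHaarMeasure_unique m2 K₀2
  have h3 : m2.map f = (m2.map f) K₀2 • Measure.addHaarMeasure K₀2 :=
    Measure.addHaarMeasure_unique (m2.map f) K₀2
  have h4 : m2 K₀2 = 1 := by
    simp [K₀2]
  have h5 : (m2.map f) K₀2 = 1 := by
    simp [K₀2]
  rw [h3, h5, h2, h4]


/-! the linear forms -/

def T (q : ℤ) : Y → Y := fun p => (p.1 + p.2, p.1 + (q : ℤ_[2]) * p.2)

def T' (q : ℤ) : Y → Y := fun p => (p.1 + p.2, -(p.1 + (q : ℤ_[2]) * p.2))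

lemma meas_T (q : ℤ) : Measurable (T q) := by
  apply Continuous.measurable
  exact (continuous_fst.add continuous_snd).prodMk
    (continuous_fst.add (continuous_const.mul continuous_snd))

lemma meas_T' (q : ℤ) : Measurable (T' q) := by
  apply Continuous.measurable
  exact (continuous_fst.add continuous_snd).prodMk
    ((continuous_fst.add (continuous_const.mul continuous_snd)).neg)

lemma T_add (q : ℤ) (v p : Y) : T q (v + p) = T q v + T q p := by
  simp only [T, Prod.fst_add, Prod.snd_add, Prod.mk_add_mk, Prod.ext_iff]
  constructor <;> ring

def rho : Measure Y := m0.prod m0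

instance : IsProbabilityMeasure rho := by unfold rho; infer_instance

lemma rho_eq : rho = m2.map (fun p : Y => (2 * p.1, 2 * p.2)) := by
  have : (fun p : Y => (2 * p.1, 2 * p.2)) =
      Prod.map (fun x : ℤ_[2] => 2 * x) (fun x : ℤ_[2] => 2 * x) := rfl
  rw [rho, m0, Measure.map_prod_map _ _ meas_dbl meas_dbl, this, m2]

lemma rho_inv (t u : ℤ_[2]) : rho.map (fun p => (2 * t, 2 * u) + p) = rho := by
  have : (fun p : Y => (2 * t, 2 * u) + p) =
      Prod.map (fun x : ℤ_[2] => 2 * t + x) (fun x : ℤ_[2] => 2 * u + x) := by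
    funext p; rfl
  rw [rho, this, ← Measure.map_prod_map _ _ (meas_tr _) (meas_tr _), m0_inv, m0_inv]

lemma lam_shift (q : ℤ) (t : ℤ_[2]) :
    (rho.map (T q)).map (fun p => ((0 : ℤ_[2]), 2 * ((q : ℤ_[2]) - 1) * t) + p)
      = rho.map (T q) := by
  rw [Measure.map_map (meas_tr2 _) (meas_T q)]
  have h1 : (fun p : Y => ((0 : ℤ_[2]), 2 * ((q : ℤ_[2]) - 1) * t) + p) ∘ T q
      = T q ∘ (fun p : Y => (2 * (-t), 2 * t) + p) := by
    funext p
    simp only [Function.comp, T, Prod.fst_add, Prod.snd_add, Prod.mk_add_mk, Prod.ext_iff]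
    constructor <;> ring
  rw [h1, ← Measure.map_map (meas_T q) (meas_tr2 _), rho_inv]

lemma lam_match (q : ℤ) (v w : Y) (t : ℤ_[2])
    (h1 : w.1 = v.1) (h2 : w.2 = v.2 + 2 * ((q : ℤ_[2]) - 1) * t) :
    (rho.map (T q)).map (fun p => w + p) = (rho.map (T q)).map (fun p => v + p) := by
  have hw : (fun p : Y => w + p) =
      (fun p : Y => v + p) ∘ (fun p => ((0 : ℤ_[2]), 2 * ((q : ℤ_[2]) - 1) * t) + p) := by
    funext p
    simp only [Function.comp, Prod.ext_iff, Prod.fst_add, Prod.snd_add, h1, h2]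
    constructor <;> ring
  rw [hw, ← Measure.map_map (meas_tr2 v) (meas_tr2 _), lam_shift]

lemma conj (q : ℤ) (v : Y) :
    (rho.map (fun p => v + p)).map (T q) = (rho.map (T q)).map (fun p => T q v + p) := by
  rw [Measure.map_map (meas_T q) (meas_tr2 v), Measure.map_map (meas_tr2 _) (meas_T q)]
  congr 1
  funext p
  simp only [Function.comp]
  exact T_add q v p

/-- the Good predicate capturing the existence of the involution matrix -/
def Good (q : ℤ) : Prop :=
  ∃ s u a b c d : ℤ_[2], s * u = 1 ∧ a + c = s ∧ b + d = s ∧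
    a + (q : ℤ_[2]) * c = -s ∧ b + (q : ℤ_[2]) * d = -((q : ℤ_[2]) * s) ∧
    a * a + b * c = s * s ∧ a * b + b * d = 0 ∧ c * a + d * c = 0 ∧ c * b + d * d = s * s

lemma lam_sigma (q : ℤ) (hg : Good q) : rho.map (T' q) = rho.map (T q) := by
  obtain ⟨s, u, a, b, c, d, hu, h1, h2, h3, h4, h5, h6, h7, h8⟩ := hg
  set B : Y → Y := fun p => (u * (a * p.1 + b * p.2), u * (c * p.1 + d * p.2)) with hB
  have hBc : Continuous B := by
    apply Continuous.prodMk
    · exact continuous_const.mul ((continuous_const.mul continuous_fst).add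
        (continuous_const.mul continuous_snd))
    · exact continuous_const.mul ((continuous_const.mul continuous_fst).add
        (continuous_const.mul continuous_snd))
  have hBa : ∀ p r : Y, B (p + r) = B p + B r := by
    intro p r
    simp only [hB, Prod.fst_add, Prod.snd_add, Prod.mk_add_mk, Prod.ext_iff]
    constructor <;> ring
  have hBB : ∀ p : Y, B (B p) = p := by
    intro p
    obtain ⟨x, y⟩ := p
    simp only [hB, Prod.ext_iff]
    constructor
    · linear_combination (u*u*x) * h5 + (u*u*y) * h6 + ((s*u+1)*x) * hu
    · linear_combination (u*u*x) * h7 + (u*u*y) * h8 + ((s*u+1)*y) * hu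
  have hTB : T' q = T q ∘ B := by
    funext p
    obtain ⟨x, y⟩ := p
    simp only [T, T', Function.comp, hB, Prod.ext_iff]
    constructor
    · linear_combination (-(u*x)) * h1 + (-(u*y)) * h2 + (-(x+y)) * hu
    · linear_combination (-(u*x)) * h3 + (-(u*y)) * h4 + (x + (q : ℤ_[2])*y) * hu
  have hrhoB : rho.map B = rho := by
    have hD : Measurable (fun p : Y => ((2 : ℤ_[2]) * p.1, (2 : ℤ_[2]) * p.2)) := by
      apply Continuous.measurable
      exact (continuous_const.mul continuous_fst).prodMk (continuous_const.mul continuous_snd)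
    have hcomm : B ∘ (fun p : Y => (2 * p.1, 2 * p.2))
        = (fun p : Y => (2 * p.1, 2 * p.2)) ∘ B := by
      funext p; simp only [Function.comp, hB, Prod.ext_iff]; constructor <;> ring
    rw [rho_eq, Measure.map_map hBc.measurable hD, hcomm,
      ← Measure.map_map hD hBc.measurable, m2_map_eq B hBc hBa hBB]
  rw [hTB, ← Measure.map_map (meas_T q) hBc.measurable, hrhoB]


/-! the mixture measure -/

def mu0 : Measure ℤ_[2] := (3/4 : ℝ≥0∞) • m0 + (1/4 : ℝ≥0∞) • m1

lemma fin_smul {α : Type*} [MeasurableSpace α] (c : ℝ≥0∞) (hc : c ≠ ⊤) (μ : Measure α)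
    [IsFiniteMeasure μ] : IsFiniteMeasure (c • μ) := by
  constructor
  simp only [Measure.smul_apply, smul_eq_mul]
  exact ENNReal.mul_lt_top hc.lt_top (measure_lt_top μ _)

lemma ne_top34 : (3/4 : ℝ≥0∞) ≠ ⊤ := by
  simp [ENNReal.div_eq_top]

lemma ne_top14 : (1/4 : ℝ≥0∞) ≠ ⊤ := by
  simp [ENNReal.div_eq_top]

instance : IsProbabilityMeasure mu0 := by
  constructor
  simp only [mu0, Measure.add_apply, Measure.smul_apply, measure_univ, smul_eq_mul, mul_one]
  rw [ENNReal.div_add_div_same]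
  norm_num
  rw [ENNReal.div_self] <;> norm_num

lemma m0_prod_m1 : m0.prod m1 = rho.map (fun p => (((0:ℤ_[2]), (1:ℤ_[2])) + p)) := by
  have : m0.prod m1 = (m0.map id).prod (m0.map (fun x => 1 + x)) := by rw [Measure.map_id]; rfl
  rw [this, Measure.map_prod_map _ _ measurable_id (meas_tr 1), rho]
  congr 1
  funext p
  simp [Prod.map, Prod.ext_iff]

lemma m1_prod_m0 : m1.prod m0 = rho.map (fun p => (((1:ℤ_[2]), (0:ℤ_[2])) + p)) := by
  have : m1.prod m0 = (m0.map (fun x => 1 + x)).prod (m0.map id) := by rw [Measure.map_id]; rfl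
  rw [this, Measure.map_prod_map _ _ (meas_tr 1) measurable_id, rho]
  congr 1
  funext p
  simp [Prod.map, Prod.ext_iff]

lemma m1_prod_m1 : m1.prod m1 = rho.map (fun p => (((1:ℤ_[2]), (1:ℤ_[2])) + p)) := by
  rw [m1, Measure.map_prod_map _ _ (meas_tr 1) (meas_tr 1), ← rho]
  congr 1

lemma mu0_prod : mu0.prod mu0 =
    (3/4 : ℝ≥0∞) • ((3/4 : ℝ≥0∞) • rho + (1/4 : ℝ≥0∞) • (m0.prod m1))
      + (1/4 : ℝ≥0∞) • ((3/4 : ℝ≥0∞) • (m1.prod m0) + (1/4 : ℝ≥0∞) • (m1.prod m1)) := by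
  haveI i1 : IsFiniteMeasure ((3/4 : ℝ≥0∞) • m0) := fin_smul _ ne_top34 _
  haveI i2 : IsFiniteMeasure ((1/4 : ℝ≥0∞) • m1) := fin_smul _ ne_top14 _
  have step1 : mu0.prod mu0 =
      ((3/4 : ℝ≥0∞) • m0).prod mu0 + ((1/4 : ℝ≥0∞) • m1).prod mu0 := by
    rw [mu0, Measure.add_prod]
  have step2 : ((3/4 : ℝ≥0∞) • m0).prod mu0 = (3/4 : ℝ≥0∞) • (m0.prod mu0) :=
    smul_prod' _ ne_top34 _ _
  have step3 : ((1/4 : ℝ≥0∞) • m1).prod mu0 = (1/4 : ℝ≥0∞) • (m1.prod mu0) :=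
    smul_prod' _ ne_top14 _ _
  have step4 : m0.prod mu0 = (3/4 : ℝ≥0∞) • (m0.prod m0) + (1/4 : ℝ≥0∞) • (m0.prod m1) := by
    rw [mu0, Measure.prod_add, prod_smul' _ ne_top34, prod_smul' _ ne_top14]
  have step5 : m1.prod mu0 = (3/4 : ℝ≥0∞) • (m1.prod m0) + (1/4 : ℝ≥0∞) • (m1.prod m1) := by
    rw [mu0, Measure.prod_add, prod_smul' _ ne_top34, prod_smul' _ ne_top14]
  rw [step1, step2, step3, step4, step5, rho]

/-- the generic conjugation lemma -/
lemma conj' (S : Y → Y) (hS : Measurable S) (hadd : ∀ v p : Y, S (v + p) = S v + S p) (v : Y) :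
    (rho.map (fun p => v + p)).map S = (rho.map S).map (fun p => S v + p) := by
  rw [Measure.map_map hS (meas_tr2 v), Measure.map_map (meas_tr2 _) hS]
  congr 1
  funext p
  simp only [Function.comp]
  exact hadd v p

lemma expand (S : Y → Y) (hS : Measurable S) (hadd : ∀ v p : Y, S (v + p) = S v + S p) :
    (mu0.prod mu0).map S =
      (3/4 : ℝ≥0∞) • ((3/4 : ℝ≥0∞) • (rho.map S)
          + (1/4 : ℝ≥0∞) • ((rho.map S).map (fun p => S ((0:ℤ_[2]), (1:ℤ_[2])) + p)))
      + (1/4 : ℝ≥0∞) • ((3/4 : ℝ≥0∞) • ((rho.map S).map (fun p => S ((1:ℤ_[2]), (0:ℤ_[2])) + p))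
          + (1/4 : ℝ≥0∞) • ((rho.map S).map (fun p => S ((1:ℤ_[2]), (1:ℤ_[2])) + p))) := by
  rw [mu0_prod, m0_prod_m1, m1_prod_m0, m1_prod_m1]
  rw [Measure.map_add _ _ hS, Measure.map_smul, Measure.map_smul,
    Measure.map_add _ _ hS, Measure.map_add _ _ hS,
    Measure.map_smul, Measure.map_smul, Measure.map_smul, Measure.map_smul]
  rw [conj' S hS hadd, conj' S hS hadd, conj' S hS hadd]

theorem joint (q : ℤ) (hg : Good q)
    (e1 : ∃ t : ℤ_[2], 2 * ((q : ℤ_[2]) - 1) * t = 2 * (1 + (q : ℤ_[2])))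
    (e2 : (∃ t : ℤ_[2], 2 * ((q : ℤ_[2]) - 1) * t = 1 + (q : ℤ_[2]))
      ∨ ((∃ t : ℤ_[2], 2 * ((q : ℤ_[2]) - 1) * t = 2 * (q : ℤ_[2]))
          ∧ (∃ t : ℤ_[2], 2 * ((q : ℤ_[2]) - 1) * t = 2))) :
    (mu0.prod mu0).map (T q) = (mu0.prod mu0).map (T' q) := by
  have hadd : ∀ v p : Y, T q (v + p) = T q v + T q p := T_add q
  have hadd' : ∀ v p : Y, T' q (v + p) = T' q v + T' q p := by
    intro v p
    simp only [T', Prod.fst_add, Prod.snd_add, Prod.mk_add_mk, Prod.ext_iff]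
    constructor <;> ring
  rw [expand (T q) (meas_T q) hadd, expand (T' q) (meas_T' q) hadd', lam_sigma q hg]
  obtain ⟨t1, ht1⟩ := e1
  have hD : (rho.map (T q)).map (fun p => T' q ((1:ℤ_[2]), (1:ℤ_[2])) + p)
      = (rho.map (T q)).map (fun p => T q ((1:ℤ_[2]), (1:ℤ_[2])) + p) := by
    apply lam_match q _ _ (-t1)
    · simp [T, T']
    · simp only [T, T']
      linear_combination ht1
  rw [hD]
  rcases e2 with ⟨t2, ht2⟩ | ⟨⟨t3, ht3⟩, ⟨t4, ht4⟩⟩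
  · -- swap matching
    have hB : (rho.map (T q)).map (fun p => T' q ((0:ℤ_[2]), (1:ℤ_[2])) + p)
        = (rho.map (T q)).map (fun p => T q ((1:ℤ_[2]), (0:ℤ_[2])) + p) := by
      apply (lam_match q _ _ t2 _ _).symm
      · simp [T, T']
      · simp only [T, T']
        linear_combination -ht2
    have hC : (rho.map (T q)).map (fun p => T' q ((1:ℤ_[2]), (0:ℤ_[2])) + p)
        = (rho.map (T q)).map (fun p => T q ((0:ℤ_[2]), (1:ℤ_[2])) + p) := by
      apply (lam_match q _ _ t2 _ _).symm
      · simp [T, T']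
      · simp only [T, T']
        linear_combination -ht2
    rw [hB, hC]
    simp only [smul_add, smul_smul]
    rw [show (3/4 * (1/4) : ℝ≥0∞) = 1/4 * (3/4) by ring]
    abel
  · -- direct matching
    have hB : (rho.map (T q)).map (fun p => T' q ((0:ℤ_[2]), (1:ℤ_[2])) + p)
        = (rho.map (T q)).map (fun p => T q ((0:ℤ_[2]), (1:ℤ_[2])) + p) := by
      apply (lam_match q _ _ t3 _ _).symm
      · simp [T, T']
      · simp only [T, T']
        linear_combination -ht3
    have hC : (rho.map (T q)).map (fun p => T' q ((1:ℤ_[2]), (0:ℤ_[2])) + p)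
        = (rho.map (T q)).map (fun p => T q ((1:ℤ_[2]), (0:ℤ_[2])) + p) := by
      apply (lam_match q _ _ t4 _ _).symm
      · simp [T, T']
      · simp only [T, T']
        linear_combination -ht4
    rw [hB, hC]


/-! non-idempotency -/

def H : Set ℤ_[2] := {x | ‖x‖ < 1}

lemma H_meas : MeasurableSet H :=
  (isOpen_lt continuous_norm continuous_const).measurableSet

lemma norm_two : ‖(2 : ℤ_[2])‖ = 1/2 := by
  have := @PadicInt.norm_p 2 ⟨Nat.prime_two⟩
  norm_num at this ⊢
  exact this

lemma two_mul_mem (x : ℤ_[2]) : (2 * x) ∈ H := by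
  simp only [H, Set.mem_setOf_eq]
  calc ‖(2:ℤ_[2]) * x‖ = ‖(2:ℤ_[2])‖ * ‖x‖ := by simp
  _ ≤ 1/2 * 1 := by
      rw [norm_two]
      exact mul_le_mul_of_nonneg_left (PadicInt.norm_le_one x) (by norm_num)
  _ < 1 := by norm_num

lemma one_add_two_mul_not_mem (x : ℤ_[2]) : (1 + 2 * x) ∉ H := by
  simp only [H, Set.mem_setOf_eq, not_lt]
  have h2 : ‖(2:ℤ_[2]) * x‖ < 1 := two_mul_mem x
  have hne : ‖(1 : ℤ_[2])‖ ≠ ‖(2:ℤ_[2]) * x‖ := by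
    rw [norm_one]; exact fun h => by rw [← h] at h2; norm_num at h2
  rw [PadicInt.norm_add_eq_max_of_ne hne, norm_one]
  exact le_max_left _ _

lemma m0_H : m0 H = 1 := by
  rw [m0, Measure.map_apply meas_dbl H_meas]
  have : (fun x : ℤ_[2] => 2 * x) ⁻¹' H = Set.univ := by
    ext x; simpa using two_mul_mem x
  rw [this, measure_univ]

lemma m1_H : m1 H = 0 := by
  rw [m1, Measure.map_apply (meas_tr 1) H_meas, m0,
    Measure.map_apply meas_dbl (H_meas.preimage (meas_tr 1))]
  have : ((fun x : ℤ_[2] => 2 * x) ⁻¹' ((fun x => 1 + x) ⁻¹' H)) = ∅ := by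
    ext x; simpa using one_add_two_mul_not_mem x
  rw [this, measure_empty]

lemma mu0_H : mu0 H = 3/4 := by
  rw [mu0, Measure.add_apply, Measure.smul_apply, Measure.smul_apply, m0_H, m1_H]
  simp

lemma norm_lt_iff_toZMod (z : ℤ_[2]) : ‖z‖ < 1 ↔ (PadicInt.toZMod z = 0) := by
  have h1 : (PadicInt.toZMod z = 0) ↔ z ∈ RingHom.ker (PadicInt.toZMod (p := 2)) := by
    rw [RingHom.mem_ker]
  rw [h1, PadicInt.ker_toZMod, IsLocalRing.mem_maximalIdeal, mem_nonunits_iff,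
    PadicInt.not_isUnit_iff]

lemma dichot (k w : ℤ_[2]) (hk : ¬ ‖k‖ < 1) : ‖k + w‖ < 1 ↔ ¬ ‖w‖ < 1 := by
  rw [norm_lt_iff_toZMod, norm_lt_iff_toZMod, map_add]
  rw [norm_lt_iff_toZMod] at hk
  revert hk
  generalize (PadicInt.toZMod k) = A
  generalize (PadicInt.toZMod w) = B
  revert A B
  decide

lemma lt34 : (3/4 : ℝ≥0∞) < 1 := by
  rw [ENNReal.div_lt_iff (Or.inl (by norm_num)) (Or.inl (by norm_num))]
  norm_num

theorem not_idem : ¬ IsIdempotentDist mu0 := by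
  rintro ⟨K, x, ν, ⟨hprob, hcomp, hK1, hinv⟩, hμ⟩
  set S : Set ℤ_[2] := (fun z => x + z) ⁻¹' H with hS
  have hSmeas : MeasurableSet S := H_meas.preimage (meas_tr x)
  have hνS : ν S = 3/4 := by
    have := mu0_H
    rw [hμ, Measure.map_apply (meas_tr x) H_meas] at this
    exact this
  by_cases hKH : ∀ k ∈ K, ‖k‖ < 1
  · by_cases hx : ‖x‖ < 1
    · have hsub : (K : Set ℤ_[2]) ⊆ S := by
        intro z hz
        simp only [hS, Set.mem_preimage, H, Set.mem_setOf_eq]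
        exact PadicInt.norm_lt_one_add hx (hKH z hz)
      have h1 : (1 : ℝ≥0∞) ≤ ν S := hK1 ▸ measure_mono hsub
      rw [hνS] at h1
      exact absurd (lt_of_le_of_lt h1 lt34) (lt_irrefl _)
    · have hdisj : S ⊆ (K : Set ℤ_[2])ᶜ := by
        intro z hz hzK
        apply hx
        have h1 : ‖x + z‖ < 1 := hz
        have h2 : ‖z‖ < 1 := hKH z hzK
        have : x = (x + z) + (-z) := by ring
        rw [this]
        apply PadicInt.norm_lt_one_add h1
        simpa using h2
      have hKc : ν ((K : Set ℤ_[2])ᶜ) = 0 := by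
        have hKm : MeasurableSet (K : Set ℤ_[2]) :=
          (hcomp.isClosed).measurableSet
        rw [measure_compl hKm (measure_ne_top ν _), hK1, measure_univ]
        simp
      have := measure_mono (μ := ν) hdisj
      rw [hνS, hKc] at this
      simp at this
  · push_neg at hKH
    obtain ⟨k, hkK, hk⟩ := hKH
    have hmap := hinv k hkK
    have hcompl : (fun z : ℤ_[2] => k + z) ⁻¹' S = Sᶜ := by
      ext z
      simp only [hS, Set.mem_preimage, Set.mem_compl_iff, H, Set.mem_setOf_eq]
      have : x + (k + z) = k + (x + z) := by ring
      rw [this]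
      exact dichot k (x + z) (not_lt.mpr hk)
    have h2 : ν S = ν Sᶜ := by
      conv_lhs => rw [← hmap]
      rw [Measure.map_apply (meas_tr k) hSmeas, hcompl]
    have h3 : ν S + ν Sᶜ = 1 := by
      rw [measure_add_measure_compl hSmeas, measure_univ]
    rw [← h2, hνS] at h3
    rw [ENNReal.div_add_div_same] at h3
    rw [ENNReal.div_eq_one_iff (by norm_num) (by norm_num)] at h3
    norm_num at h3

lemma odd_unit (k : ℤ) (hk : Odd k) : ∃ u : ℤ_[2], (k : ℤ_[2]) * u = 1 := by
  have hdvd : ¬ ((2:ℤ) ∣ k) := by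
    intro h
    rcases hk with ⟨r, hr⟩
    omega
  have h1 : ¬ ‖(k : ℤ_[2])‖ < 1 := by
    rw [PadicInt.norm_int_lt_one_iff_dvd]
    exact_mod_cast hdvd
  have h2 : ‖(k : ℤ_[2])‖ = 1 := le_antisymm (PadicInt.norm_le_one _) (not_lt.mp h1)
  exact (PadicInt.isUnit_iff.mpr h2).exists_right_inv

theorem joint_all (q : ℤ) (hq : |q| = 2 ∨ ∃ m : ℤ, q = 4 * m + 3) :
    (mu0.prod mu0).map (T q) = (mu0.prod mu0).map (T' q) := by
  rcases hq with habs | ⟨mm, rfl⟩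
  · rcases (abs_eq (by norm_num : (0:ℤ) ≤ 2)).mp habs with rfl | rfl
    · -- q = 2
      apply joint
      · exact ⟨1, 1, 3, 4, -2, -3, by norm_num, by norm_num, by norm_num, by push_cast; ring,
          by push_cast; ring, by norm_num, by norm_num, by norm_num, by norm_num⟩
      · exact ⟨3, by push_cast; ring⟩
      · refine Or.inr ⟨⟨2, by push_cast; ring⟩, ⟨1, by push_cast; ring⟩⟩
    · -- q = -2
      obtain ⟨u3, hu⟩ := odd_unit 3 ⟨1, by ring⟩
      push_cast at hu
      apply joint
      · refine ⟨-3, -u3, -1, -4, -2, 1, ?_, by norm_num, by norm_num, by push_cast; ring,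
          by push_cast; ring, by norm_num, by norm_num, by norm_num, by norm_num⟩
        linear_combination hu
      · refine ⟨u3, ?_⟩
        push_cast
        linear_combination (-2 : ℤ_[2]) * hu
      · refine Or.inr ⟨⟨2 * u3, ?_⟩, ⟨-u3, ?_⟩⟩
        · push_cast
          linear_combination (-4 : ℤ_[2]) * hu
        · push_cast
          linear_combination (2 : ℤ_[2]) * hu
  · -- q = 4m + 3
    obtain ⟨u, hu⟩ := odd_unit (2 * mm + 1) ⟨mm, by ring⟩
    push_cast at hu
    apply joint
    · refine ⟨((2 * mm + 1 : ℤ) : ℤ_[2]), u, ((2 * mm + 2 : ℤ) : ℤ_[2]),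
        ((4 * mm + 3 : ℤ) : ℤ_[2]), -1, -((2 * mm + 2 : ℤ) : ℤ_[2]), ?_, by push_cast; ring,
        by push_cast; ring, by push_cast; ring, by push_cast; ring, by push_cast; ring,
        by push_cast; ring, by push_cast; ring, by push_cast; ring⟩
      push_cast
      linear_combination hu
    · refine ⟨((2 * mm + 2 : ℤ) : ℤ_[2]) * u, ?_⟩
      push_cast
      linear_combination (8 * (mm : ℤ_[2]) + 8) * hu
    · refine Or.inl ⟨((mm + 1 : ℤ) : ℤ_[2]) * u, ?_⟩
      push_cast
      linear_combination (4 * (mm : ℤ_[2]) + 4) * hu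

end HeydeAux

open HeydeAux

/-- **Lemma 2.** Let `q` be an integer with either `|q| = 2` or `q = 4m + 3` for some
integer `m`, and let `X = Δ₂` be the group of 2-adic integers.  Then there exist
independent identically distributed `X`-valued random variables `ξ₁, ξ₂` whose common
distribution `μ` is not an idempotent distribution, such that the conditional
distribution of the linear form `L₂ = ξ₁ + qξ₂` given `L₁ = ξ₁ + ξ₂` is symmetric. -/
theorem heyde_counterexample_two_adic
    (q : ℤ) (hq : |q| = 2 ∨ ∃ m : ℤ, q = 4 * m + 3) :
    ∃ (Ω : Type) (_ : MeasurableSpace Ω) (P : Measure Ω) (_ : IsProbabilityMeasure P)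
      (ξ1 ξ2 : Ω → ℤ_[2]),
      Measurable ξ1 ∧ Measurable ξ2 ∧ IndepFun ξ1 ξ2 P ∧
      P.map ξ1 = P.map ξ2 ∧
      ¬ IsIdempotentDist (P.map ξ1) ∧
      (P.map (fun ω => (ξ1 ω + ξ2 ω, ξ1 ω + q • ξ2 ω)) =
        P.map (fun ω => (ξ1 ω + ξ2 ω, -(ξ1 ω + q • ξ2 ω)))) := by
  refine ⟨ℤ_[2] × ℤ_[2], inferInstance, mu0.prod mu0, inferInstance, Prod.fst, Prod.snd,
    measurable_fst, measurable_snd, ?_, ?_, ?_, ?_⟩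
  · rw [ProbabilityTheory.indepFun_iff_map_prod_eq_prod_map_map measurable_fst.aemeasurable
      measurable_snd.aemeasurable]
    have h1 : (mu0.prod mu0).map Prod.fst = mu0 := by
      rw [Measure.map_fst_prod]; simp
    have h2 : (mu0.prod mu0).map Prod.snd = mu0 := by
      rw [Measure.map_snd_prod]; simp
    rw [h1, h2]
    have h3 : (fun ω : ℤ_[2] × ℤ_[2] => (ω.1, ω.2)) = id := by funext ω; rfl
    rw [h3, Measure.map_id]
  · rw [Measure.map_fst_prod, Measure.map_snd_prod]
  · have h1 : (mu0.prod mu0).map Prod.fst = mu0 := by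
      rw [Measure.map_fst_prod]; simp
    rw [h1]
    exact not_idem
  · have hT : (fun ω : ℤ_[2] × ℤ_[2] => (ω.1 + ω.2, ω.1 + q • ω.2)) = T q := by
      funext ω
      simp [T, zsmul_eq_mul]
    have hT' : (fun ω : ℤ_[2] × ℤ_[2] => (ω.1 + ω.2, -(ω.1 + q • ω.2))) = T' q := by
      funext ω
      simp [T', zsmul_eq_mul]
    rw [hT, hT']
    exact joint_all q hq
end
end

section
/- Let X be a locally compact second countable Abelian group, let δ_1, δ_2 be continuous endomorphisms of X, and let ξ_1, ξ_2 be independent random variables with values in X and distributions μ_1, μ_2. If the conditional distribution of the linear form L_2 = δ_1ξ_1 + δ_2ξ_2 given L_1 = ξ_1 + ξ_2 is symmetric, then the linear forms L'_1 = (δ_1+δ_2)ξ_1 + 2δ_2ξ_2 and L'_2 = 2δ_1ξ_1 + (δ_1+δ_2)ξ_2 are independent. -/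
open MeasureTheory ProbabilityTheory

noncomputable section

/-- **Lemma 6.** Let `X` be a locally compact second countable Abelian group, let
`δ₁, δ₂` be continuous endomorphisms of `X`, and let `ξ₁, ξ₂` be independent `X`-valued
random variables with distributions `μ₁, μ₂`.  If the conditional distribution of the
linear form `L₂ = δ₁ξ₁ + δ₂ξ₂` given `L₁ = ξ₁ + ξ₂` is symmetric, then the linear forms
`L′₁ = (δ₁+δ₂)ξ₁ + 2δ₂ξ₂` and `L′₂ = 2δ₁ξ₁ + (δ₁+δ₂)ξ₂` are independent. -/
theorem symmetry_implies_independence_of_modified_forms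
    {X : Type*} [AddCommGroup X] [TopologicalSpace X] [IsTopologicalAddGroup X]
    [LocallyCompactSpace X] [SecondCountableTopology X]
    [MeasurableSpace X] [BorelSpace X]
    {Ω : Type*} [MeasurableSpace Ω] (P : Measure Ω) [IsProbabilityMeasure P]
    (ξ1 ξ2 : Ω → X) (hmeas1 : Measurable ξ1) (hmeas2 : Measurable ξ2)
    (hindep : IndepFun ξ1 ξ2 P)
    (μ1 μ2 : Measure X) (hμ1 : μ1 = P.map ξ1) (hμ2 : μ2 = P.map ξ2)
    (δ1 δ2 : ContinuousAddMonoidHom X X)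
    (hsym : P.map (fun ω => (ξ1 ω + ξ2 ω, δ1 (ξ1 ω) + δ2 (ξ2 ω))) =
      P.map (fun ω => (ξ1 ω + ξ2 ω, -(δ1 (ξ1 ω) + δ2 (ξ2 ω))))) :
    IndepFun (fun ω => (δ1 (ξ1 ω) + δ2 (ξ1 ω)) + (δ2 (ξ2 ω) + δ2 (ξ2 ω)))
      (fun ω => (δ1 (ξ1 ω) + δ1 (ξ1 ω)) + (δ1 (ξ2 ω) + δ2 (ξ2 ω))) P := by
  have mδ1 : Measurable (⇑δ1) := δ1.continuous.measurable
  have mδ2 : Measurable (⇑δ2) := δ2.continuous.measurable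
  set f1 : Ω → X := fun ω => (δ1 (ξ1 ω) + δ2 (ξ1 ω)) + (δ2 (ξ2 ω) + δ2 (ξ2 ω)) with hf1
  set f2 : Ω → X := fun ω => (δ1 (ξ1 ω) + δ1 (ξ1 ω)) + (δ1 (ξ2 ω) + δ2 (ξ2 ω)) with hf2
  set g1 : Ω → X := fun ω => δ2 (ξ1 ω) - δ1 (ξ1 ω) with hg1
  set g2 : Ω → X := fun ω => δ1 (ξ2 ω) - δ2 (ξ2 ω) with hg2
  set S : X × X → X × X := fun p => (δ2 p.1 + p.2, δ1 p.1 + p.2) with hS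
  have mS : Measurable S := by
    apply Measurable.prod
    · exact (mδ2.comp measurable_fst).add measurable_snd
    · exact (mδ1.comp measurable_fst).add measurable_snd
  have mf1 : Measurable f1 :=
    ((mδ1.comp hmeas1).add (mδ2.comp hmeas1)).add ((mδ2.comp hmeas2).add (mδ2.comp hmeas2))
  have mf2 : Measurable f2 :=
    ((mδ1.comp hmeas1).add (mδ1.comp hmeas1)).add ((mδ1.comp hmeas2).add (mδ2.comp hmeas2))
  have mg1 : Measurable g1 := (mδ2.comp hmeas1).sub (mδ1.comp hmeas1)
  have mg2 : Measurable g2 := (mδ1.comp hmeas2).sub (mδ2.comp hmeas2)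
  have mL : Measurable (fun ω => (ξ1 ω + ξ2 ω, δ1 (ξ1 ω) + δ2 (ξ2 ω))) :=
    (hmeas1.add hmeas2).prodMk ((mδ1.comp hmeas1).add (mδ2.comp hmeas2))
  have mL' : Measurable (fun ω => (ξ1 ω + ξ2 ω, -(δ1 (ξ1 ω) + δ2 (ξ2 ω)))) :=
    (hmeas1.add hmeas2).prodMk ((mδ1.comp hmeas1).add (mδ2.comp hmeas2)).neg
  -- key joint law identity
  have h1 : P.map (fun ω => (f1 ω, f2 ω)) = P.map (fun ω => (g1 ω, g2 ω)) := by
    have e1 : (fun ω => (f1 ω, f2 ω)) =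
        S ∘ (fun ω => (ξ1 ω + ξ2 ω, δ1 (ξ1 ω) + δ2 (ξ2 ω))) := by
      funext ω
      simp only [hS, hf1, hf2, Function.comp_apply, map_add]
      rw [Prod.mk.injEq]; exact ⟨by abel, by abel⟩
    have e2 : (fun ω => (g1 ω, g2 ω)) =
        S ∘ (fun ω => (ξ1 ω + ξ2 ω, -(δ1 (ξ1 ω) + δ2 (ξ2 ω)))) := by
      funext ω
      simp only [hS, hg1, hg2, Function.comp_apply, map_add]
      rw [Prod.mk.injEq]; exact ⟨by abel, by abel⟩
    rw [e1, e2, ← Measure.map_map mS mL, hsym, Measure.map_map mS mL']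
  have hgind : IndepFun g1 g2 P :=
    hindep.comp (mδ2.sub mδ1) (mδ1.sub mδ2)
  have hprod : P.map (fun ω => (g1 ω, g2 ω)) = (P.map g1).prod (P.map g2) :=
    (indepFun_iff_map_prod_eq_prod_map_map mg1.aemeasurable mg2.aemeasurable).mp hgind
  have hm1 : P.map f1 = P.map g1 := by
    have := congrArg (Measure.map Prod.fst) h1
    rwa [Measure.map_map measurable_fst (mf1.prodMk mf2),
      Measure.map_map measurable_fst (mg1.prodMk mg2)] at this
  have hm2 : P.map f2 = P.map g2 := by
    have := congrArg (Measure.map Prod.snd) h1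
    rwa [Measure.map_map measurable_snd (mf1.prodMk mf2),
      Measure.map_map measurable_snd (mg1.prodMk mg2)] at this
  rw [indepFun_iff_map_prod_eq_prod_map_map mf1.aemeasurable mf2.aemeasurable]
  rw [h1, hprod, hm1, hm2]
end
end

section
/- Let Y be an Abelian group, let a, b be integers with ab ≠ 0, and let g_1, g_2 : Y → ℂ be functions satisfying g_1(u+av)·g_2(u+bv) = g_1(u)·g_1(av)·g_2(u)·g_2(bv) for all u, v ∈ Y, together with g_1(−y) = conj(g_1(y)), g_2(−y) = conj(g_2(y)) for all y ∈ Y and g_1(0) = g_2(0) = 1. Set c = a − b. If for some z_0 ∈ Y the element y_0 = c·z_0 satisfies g_1(y_0)·g_2(y_0) ≠ 0, then g_1(y)·g_2(y) ≠ 0 for every y in the subgroup M = {k·a·b·z_0 : k ∈ ℤ}. -/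
noncomputable section

/-- **Lemma 7.** Let `Y` be an Abelian group, `a, b` integers with `ab ≠ 0`, and let
`g₁, g₂ : Y → ℂ` satisfy `g₁(u+av)·g₂(u+bv) = g₁(u)·g₁(av)·g₂(u)·g₂(bv)` for all
`u, v ∈ Y`, together with `gⱼ(−y) = conj(gⱼ(y))` and `gⱼ(0) = 1`.  Set `c = a − b`.
If for some `z₀ ∈ Y` the element `y₀ = c·z₀` satisfies `g₁(y₀)·g₂(y₀) ≠ 0`, then
`g₁(y)·g₂(y) ≠ 0` for every `y` in the subgroup `M = {k·a·b·z₀ : k ∈ ℤ}`. -/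
theorem nonvanishing_on_subgroup
    {Y : Type*} [AddCommGroup Y] (a b : ℤ) (hab : a * b ≠ 0)
    (g1 g2 : Y → ℂ)
    (heq : ∀ u v : Y, g1 (u + a • v) * g2 (u + b • v) =
      g1 u * g1 (a • v) * g2 u * g2 (b • v))
    (hg1 : ∀ y : Y, g1 (-y) = starRingEnd ℂ (g1 y))
    (hg2 : ∀ y : Y, g2 (-y) = starRingEnd ℂ (g2 y))
    (hg10 : g1 0 = 1) (hg20 : g2 0 = 1)
    (z0 : Y) (hnz : g1 ((a - b) • z0) * g2 ((a - b) • z0) ≠ 0) :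
    ∀ y ∈ AddSubgroup.zmultiples ((a * b) • z0), g1 y * g2 y ≠ 0 := by
  -- the key functional equation specialized to multiples of z0
  have key : ∀ m n : ℤ, g1 ((m + a * n) • z0) * g2 ((m + b * n) • z0) =
      g1 (m • z0) * g1 ((a * n) • z0) * g2 (m • z0) * g2 ((b * n) • z0) := by
    intro m n
    have h := heq (m • z0) (n • z0)
    simpa [smul_smul, add_smul] using h
  -- negation helpers
  have hneg1 : ∀ m : ℤ, g1 (m • z0) ≠ 0 → g1 ((-m) • z0) ≠ 0 := by
    intro m h
    rw [neg_smul, hg1, starRingEnd_apply]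
    exact star_ne_zero.mpr h
  have hneg2 : ∀ m : ℤ, g2 (m • z0) ≠ 0 → g2 ((-m) • z0) ≠ 0 := by
    intro m h
    rw [neg_smul, hg2, starRingEnd_apply]
    exact star_ne_zero.mpr h
  have h1c : g1 ((a - b) • z0) ≠ 0 := left_ne_zero_of_mul hnz
  have h2c : g2 ((a - b) • z0) ≠ 0 := right_ne_zero_of_mul hnz
  have hbase1 := key (-b) 1
  have e1 : (-b + a * 1 : ℤ) = a - b := by ring
  have e2 : (-b + b * 1 : ℤ) = 0 := by ring
  rw [e1, e2, zero_smul, hg20] at hbase1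
  simp only [mul_one, neg_smul] at hbase1
  have h1a' : g1 (a • z0) ≠ 0 := fun h => h1c (by rw [hbase1, h]; ring)
  have h1nb : g1 (-(b • z0)) ≠ 0 := fun h => h1c (by rw [hbase1, h]; ring)
  have h2b' : g2 (b • z0) ≠ 0 := fun h => h1c (by rw [hbase1, h]; ring)
  have h1b : g1 (b • z0) ≠ 0 := by
    intro h
    apply h1nb
    rw [hg1, h, map_zero]
  have hbase2 := key (-a) 1
  have e3 : (-a + a * 1 : ℤ) = 0 := by ring
  have e4 : (-a + b * 1 : ℤ) = -(a - b) := by ring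
  rw [e3, e4, zero_smul, hg10, one_mul] at hbase2
  simp only [mul_one, neg_smul] at hbase2
  have hlhs2 : g2 (-((a - b) • z0)) ≠ 0 := by
    intro h
    apply h2c
    have := hg2 ((a - b) • z0)
    rw [h] at this
    exact (starRingEnd ℂ).injective (by simpa using this.symm)
  have h2na : g2 (-(a • z0)) ≠ 0 := fun h => hlhs2 (by rw [hbase2, h]; ring)
  have h2a : g2 (a • z0) ≠ 0 := by
    intro h
    apply h2na
    rw [hg2, h, map_zero]
  -- main induction: g1((a*n)•z0) ≠ 0 and g2((b*n)•z0) ≠ 0 for all n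
  have mainN : ∀ n : ℕ, g1 ((a * n) • z0) ≠ 0 ∧ g2 ((b * n) • z0) ≠ 0 := by
    intro n
    induction n with
    | zero => simp [hg10, hg20]
    | succ k ih =>
      obtain ⟨ih1, ih2⟩ := ih
      constructor
      · have h := key a k
        have e : (a + a * k : ℤ) = a * (k + 1 : ℕ) := by push_cast; ring
        rw [e] at h
        intro hz
        rw [hz, zero_mul] at h
        exact (mul_ne_zero (mul_ne_zero (mul_ne_zero h1a' ih1) h2a) ih2) h.symm
      · have h := key b k
        have e : (b + b * k : ℤ) = b * (k + 1 : ℕ) := by push_cast; ring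
        rw [e] at h
        intro hz
        rw [hz, mul_zero] at h
        exact (mul_ne_zero (mul_ne_zero (mul_ne_zero h1b ih1) h2b') ih2) h.symm
  have mainZ : ∀ n : ℤ, g1 ((a * n) • z0) ≠ 0 ∧ g2 ((b * n) • z0) ≠ 0 := by
    intro n
    rcases le_or_gt 0 n with h | h
    · lift n to ℕ using h
      exact mainN n
    · obtain ⟨h1, h2⟩ := mainN (-n).toNat
      have e : ((-n).toNat : ℤ) = -n := Int.toNat_of_nonneg (by omega)
      rw [e] at h1 h2
      constructor
      · have := hneg1 _ h1
        have e2 : (-(a * -n) : ℤ) = a * n := by ring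
        rwa [e2] at this
      · have := hneg2 _ h2
        have e2 : (-(b * -n) : ℤ) = b * n := by ring
        rwa [e2] at this
  have h1ab : g1 ((a * b) • z0) ≠ 0 := (mainZ b).1
  have h1aa : g1 ((a * a) • z0) ≠ 0 := (mainZ a).1
  have h2ab : g2 ((b * a) • z0) ≠ 0 := (mainZ a).2
  have h2bb : g2 ((b * b) • z0) ≠ 0 := (mainZ b).2
  -- final induction
  have finN : ∀ k : ℕ, g1 ((a * b * k) • z0) ≠ 0 ∧ g2 ((a * b * k) • z0) ≠ 0 := by
    intro k
    induction k with
    | zero => simp [hg10, hg20]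
    | succ k ih =>
      obtain ⟨ih1, ih2⟩ := ih
      constructor
      · have h := key (a * b * k) b
        have e : (a * b * k + a * b : ℤ) = a * b * (k + 1 : ℕ) := by push_cast; ring
        rw [e] at h
        intro hz
        rw [hz, zero_mul] at h
        exact (mul_ne_zero (mul_ne_zero (mul_ne_zero ih1 h1ab) ih2) h2bb) h.symm
      · have h := key (a * b * k) a
        have e : (a * b * k + b * a : ℤ) = a * b * (k + 1 : ℕ) := by push_cast; ring
        rw [e] at h
        intro hz
        rw [hz, mul_zero] at h
        exact (mul_ne_zero (mul_ne_zero (mul_ne_zero ih1 h1aa) ih2) h2ab) h.symm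
  have finZ : ∀ k : ℤ, g1 ((a * b * k) • z0) ≠ 0 ∧ g2 ((a * b * k) • z0) ≠ 0 := by
    intro k
    rcases le_or_gt 0 k with h | h
    · lift k to ℕ using h
      exact finN k
    · obtain ⟨h1, h2⟩ := finN (-k).toNat
      have e : ((-k).toNat : ℤ) = -k := Int.toNat_of_nonneg (by omega)
      rw [e] at h1 h2
      have e2 : (-(a * b * -k) : ℤ) = a * b * k := by ring
      exact ⟨by have := hneg1 _ h1; rwa [e2] at this,
             by have := hneg2 _ h2; rwa [e2] at this⟩
  intro y hy
  rw [AddSubgroup.mem_zmultiples_iff] at hy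
  obtain ⟨k, hk⟩ := hy
  rw [← hk, smul_smul]
  have e : (k * (a * b) : ℤ) = a * b * k := by ring
  rw [e]
  exact mul_ne_zero (finZ k).1 (finZ k).2
end
end

section
/- Let M be a subgroup of ℚ, let a, b be integers with ab ≠ 0, and let g_1, g_2 : M → ℝ be functions satisfying g_1(u+av)·g_2(u+bv) = g_1(u)·g_1(av)·g_2(u)·g_2(bv) for all u, v ∈ M, together with g_1(−y) = g_1(y), g_2(−y) = g_2(y), g_1(0) = g_2(0) = 1, and 0 < g_1(y) ≤ 1, 0 < g_2(y) ≤ 1 for all y ∈ M. Set c = b − a. Then there exist λ_1 ≥ 0 and λ_2 ≥ 0 such that g_1(y) = exp(−λ_1 y²) and g_2(y) = exp(−λ_2 y²) for all y in the subgroup M^{(cab)} = {c·a·b·y : y ∈ M}. -/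
noncomputable section


lemma aux_quad (M : AddSubgroup ℚ) (f : M → ℝ) (N : ℤ)
    (heven : ∀ y : M, f (-y) = f y) (hf0 : f 0 = 0)
    (hle : ∀ y : M, f y ≤ 0)
    (hpar : ∀ u y : M, f (u + N • y) + f (u - N • y) = 2 * f u + 2 * f (N • y)) :
    ∃ lam : ℝ, 0 ≤ lam ∧
      ∀ y : M, f (N • y) = -(lam * ((((N • y : M) : ℚ) : ℝ)) ^ 2) := by
  have H : ∀ (k : ℕ) (y : M), f (k • (N • y)) = (k : ℝ)^2 * f (N • y) ∧
      f ((k+1) • (N • y)) = ((k : ℝ)+1)^2 * f (N • y) := by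
    intro k y
    induction k with
    | zero =>
      constructor
      · norm_num [hf0]
      · norm_num
    | succ n ih =>
      obtain ⟨e1, e2⟩ := ih
      constructor
      · rw [e2]; push_cast; ring
      · have hp := hpar ((n+1) • (N • y)) y
        rw [show (n+1) • (N•y) + N•y = (n+2) • (N•y) by rw [succ_nsmul (N•y) (n+1)],
            show (n+1) • (N•y) - N•y = n • (N•y) by rw [succ_nsmul (N•y) n]; abel] at hp
        show f ((n+2) • (N•y)) = _
        push_cast at e1 e2 ⊢
        linear_combination hp - e1 + 2 * e2
  have hz : ∀ (m : ℤ) (y : M), f (m • (N • y)) = (m : ℝ)^2 * f (N • y) := by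
    intro m y
    obtain ⟨n, rfl | rfl⟩ := m.eq_nat_or_neg
    · rw [natCast_zsmul]
      have := (H n y).1
      push_cast
      exact this
    · rw [neg_smul, natCast_zsmul, heven]
      have := (H n y).1
      push_cast
      simpa using this
  by_cases hex : ∃ y0 : M, ((N • y0 : M) : ℚ) ≠ 0
  · obtain ⟨y0, hy0⟩ := hex
    set H0 : ℝ := (((N • y0 : M) : ℚ) : ℝ) with hH0
    have hH0ne : H0 ≠ 0 := Rat.cast_ne_zero.mpr hy0
    refine ⟨-f (N • y0) / H0 ^ 2, div_nonneg (by linarith [hle (N • y0)]) (sq_nonneg _), ?_⟩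
    intro y
    by_cases hy : ((N • y : M) : ℚ) = 0
    · have hz0 : (N • y : M) = 0 := Subtype.ext (by simpa using hy)
      simp [hz0, hf0]
    · set r : ℚ := ((N • y : M) : ℚ) / ((N • y0 : M) : ℚ) with hr
      have hdq : ((r.den : ℤ) : ℚ) ≠ 0 := by exact_mod_cast r.den_ne_zero
      have h1 : (r.num : ℚ) = r * (r.den : ℚ) := by
        exact (Rat.mul_den_eq_num r).symm
      have hkeyq : ((r.den : ℤ) : ℚ) * ((N • y : M) : ℚ)
          = (r.num : ℚ) * ((N • y0 : M) : ℚ) := by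
        have h2 : ((N • y : M) : ℚ) = r * ((N • y0 : M) : ℚ) := by
          rw [hr, div_mul_cancel₀ _ hy0]
        rw [h2, h1]; push_cast; ring
      have hkey : ((r.den : ℤ) • (N • y) : M) = (r.num • (N • y0) : M) := by
        apply Subtype.ext
        have : (((r.den : ℤ) • (N • y) : M) : ℚ) = ((r.den : ℤ) : ℚ) * ((N • y : M) : ℚ) := by
          push_cast [zsmul_eq_mul]
          ring
        have h4 : (((r.num : ℤ) • (N • y0) : M) : ℚ) = ((r.num : ℤ) : ℚ) * ((N • y0 : M) : ℚ) := by
          push_cast [zsmul_eq_mul]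
          ring
        rw [this, h4, hkeyq]
      have hf : ((r.den : ℝ))^2 * f (N • y) = ((r.num : ℝ))^2 * f (N • y0) := by
        have a1 := hz (r.den : ℤ) y
        have a2 := hz r.num y0
        rw [hkey, a2] at a1
        push_cast at a1 ⊢
        linarith
      set Hy : ℝ := (((N • y : M) : ℚ) : ℝ) with hHy
      have hcast : (r.den : ℝ) * Hy = (r.num : ℝ) * H0 := by
        have := congrArg (fun q : ℚ => (q : ℝ)) hkeyq
        push_cast at this
        simpa [hHy, hH0] using this
      have hdn : (r.den : ℝ) ≠ 0 := Nat.cast_ne_zero.mpr r.den_ne_zero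
      have hHyv : Hy = (r.num : ℝ) * H0 / (r.den : ℝ) := by
        field_simp
        linear_combination hcast
      have hfy : f (N • y) = (r.num : ℝ)^2 * f (N • y0) / (r.den : ℝ)^2 := by
        field_simp
        linear_combination hf
      rw [hfy, hHyv]
      field_simp
  · push_neg at hex
    refine ⟨0, le_refl 0, fun y => ?_⟩
    have hz0 : (N • y : M) = 0 := Subtype.ext (by simpa using hex y)
    simp [hz0, hf0]

/-- **Lemma 8.** Let `M` be a subgroup of `ℚ`, let `a, b` be integers with `ab ≠ 0`, and
let `g₁, g₂ : M → ℝ` satisfy `g₁(u+av)·g₂(u+bv) = g₁(u)·g₁(av)·g₂(u)·g₂(bv)` for all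
`u, v ∈ M`, together with `gⱼ(−y) = gⱼ(y)`, `gⱼ(0) = 1` and `0 < gⱼ(y) ≤ 1`.  Set
`c = b − a`.  Then there exist `λ₁, λ₂ ≥ 0` such that `g₁(y) = exp(−λ₁y²)` and
`g₂(y) = exp(−λ₂y²)` for all `y` in the subgroup `M^{(cab)} = {c·a·b·y : y ∈ M}`. -/
theorem gaussian_form_on_subgroup
    (M : AddSubgroup ℚ) (a b : ℤ) (hab : a * b ≠ 0)
    (g1 g2 : M → ℝ)
    (heq : ∀ u v : M, g1 (u + a • v) * g2 (u + b • v) =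
      g1 u * g1 (a • v) * g2 u * g2 (b • v))
    (hg1 : ∀ y : M, g1 (-y) = g1 y) (hg2 : ∀ y : M, g2 (-y) = g2 y)
    (hg10 : g1 0 = 1) (hg20 : g2 0 = 1)
    (hpos1 : ∀ y : M, 0 < g1 y ∧ g1 y ≤ 1) (hpos2 : ∀ y : M, 0 < g2 y ∧ g2 y ≤ 1) :
    ∃ lam1 lam2 : ℝ, 0 ≤ lam1 ∧ 0 ≤ lam2 ∧
      ∀ y : M, g1 (((b - a) * a * b) • y) =
          Real.exp (-(lam1 * ((((((b - a) * a * b) • y : M) : ℚ) : ℝ)) ^ 2)) ∧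
        g2 (((b - a) * a * b) • y) =
          Real.exp (-(lam2 * ((((((b - a) * a * b) • y : M) : ℚ) : ℝ)) ^ 2)) := by
  set N : ℤ := (b - a) * a * b with hN
  set f1 : M → ℝ := fun y => Real.log (g1 y) with hf1
  set f2 : M → ℝ := fun y => Real.log (g2 y) with hf2
  have l1 : ∀ x : M, g1 x ≠ 0 := fun x => (hpos1 x).1.ne'
  have l2 : ∀ x : M, g2 x ≠ 0 := fun x => (hpos2 x).1.ne'
  have hf1even : ∀ y : M, f1 (-y) = f1 y := fun y => by simp only [hf1, hg1]
  have hf2even : ∀ y : M, f2 (-y) = f2 y := fun y => by simp only [hf2, hg2]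
  have hf10 : f1 0 = 0 := by simp [hf1, hg10]
  have hf20 : f2 0 = 0 := by simp [hf2, hg20]
  have hf1le : ∀ y : M, f1 y ≤ 0 := fun y => Real.log_nonpos (hpos1 y).1.le (hpos1 y).2
  have hf2le : ∀ y : M, f2 y ≤ 0 := fun y => Real.log_nonpos (hpos2 y).1.le (hpos2 y).2
  have heqf : ∀ u v : M, f1 (u + a • v) + f2 (u + b • v) =
      f1 u + f1 (a • v) + f2 u + f2 (b • v) := by
    intro u v
    have h := congrArg Real.log (heq u v)
    rw [Real.log_mul (l1 _) (l2 _),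
        Real.log_mul (mul_ne_zero (mul_ne_zero (l1 _) (l1 _)) (l2 _)) (l2 _),
        Real.log_mul (mul_ne_zero (l1 _) (l1 _)) (l2 _),
        Real.log_mul (l1 _) (l1 _)] at h
    simp only [hf1, hf2]
    linarith [h]
  -- key identity 1: second differences of f1 with increments a•s, (b-a)•t do not depend on u
  have key1 : ∀ u s t : M,
      f1 (u + a • s + (b - a) • t) - f1 (u + a • s) - f1 (u + (b - a) • t) + f1 u =
      f1 (a • s - a • t) + f2 (b • s - b • t) - f1 (a • s) - f2 (b • s)
        - f1 (-(a • t)) - f2 (-(b • t)) := by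
    intro u s t
    have h1 := heqf (u + b • t) (s - t)
    have h2 := heqf u s
    have h3 := heqf (u + b • t) (-t)
    rw [show (u + b • t) + a • (s - t) = u + a • s + (b - a) • t by
          simp only [smul_sub, sub_smul]; abel,
        show (u + b • t) + b • (s - t) = u + b • s by
          simp only [smul_sub]; abel,
        show a • (s - t) = a • s - a • t from smul_sub a s t,
        show b • (s - t) = b • s - b • t from smul_sub b s t] at h1
    rw [show (u + b • t) + a • (-t) = u + (b - a) • t by
          simp only [smul_neg, sub_smul]; abel,
        show (u + b • t) + b • (-t) = u by simp only [smul_neg]; abel,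
        show a • (-t) = -(a • t) from smul_neg a t,
        show b • (-t) = -(b • t) from smul_neg b t] at h3
    linarith [h1, h2, h3]
  have par1 : ∀ u y : M, f1 (u + N • y) + f1 (u - N • y) = 2 * f1 u + 2 * f1 (N • y) := by
    intro u y
    have e_as : a • (((b - a) * b) • y) = N • y := by
      rw [smul_smul]; congr 1; ring
    have e_ct : (b - a) • ((-(a * b)) • y) = -(N • y) := by
      rw [smul_smul, show (b - a) * -(a * b) = -((b - a) * a * b) by ring, neg_smul]
    have h1 := key1 u (((b - a) * b) • y) ((-(a * b)) • y)
    have h2 := key1 0 (((b - a) * b) • y) ((-(a * b)) • y)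
    rw [e_as, e_ct] at h1 h2
    rw [show u + N • y + -(N • y) = u by abel,
        show u + -(N • y) = u - N • y by abel] at h1
    rw [show (0 : M) + N • y + -(N • y) = 0 by abel,
        show (0 : M) + N • y = N • y by abel,
        show (0 : M) + -(N • y) = -(N • y) by abel,
        hf1even (N • y), hf10] at h2
    linarith [h1, h2]
  -- key identity 2 for f2
  have key2 : ∀ u s t : M,
      f2 (u + b • s - (b - a) • t) - f2 (u + b • s) - f2 (u - (b - a) • t) + f2 u =
      f1 (a • s - a • t) + f2 (b • s - b • t) - f1 (a • s) - f2 (b • s)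
        - f1 (-(a • t)) - f2 (-(b • t)) := by
    intro u s t
    have h1 := heqf (u + a • t) (s - t)
    have h2 := heqf u s
    have h3 := heqf (u + a • t) (-t)
    rw [show (u + a • t) + a • (s - t) = u + a • s by
          simp only [smul_sub]; abel,
        show (u + a • t) + b • (s - t) = u + b • s - (b - a) • t by
          simp only [smul_sub, sub_smul]; abel,
        show a • (s - t) = a • s - a • t from smul_sub a s t,
        show b • (s - t) = b • s - b • t from smul_sub b s t] at h1
    rw [show (u + a • t) + a • (-t) = u by simp only [smul_neg]; abel,
        show (u + a • t) + b • (-t) = u - (b - a) • t by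
          simp only [smul_neg, sub_smul]; abel,
        show a • (-t) = -(a • t) from smul_neg a t,
        show b • (-t) = -(b • t) from smul_neg b t] at h3
    linarith [h1, h2, h3]
  have par2 : ∀ u y : M, f2 (u + N • y) + f2 (u - N • y) = 2 * f2 u + 2 * f2 (N • y) := by
    intro u y
    have e_bs : b • (((b - a) * a) • y) = N • y := by
      rw [smul_smul]; congr 1; ring
    have e_ct : (b - a) • ((a * b) • y) = N • y := by
      rw [smul_smul]; congr 1; ring
    have h1 := key2 u (((b - a) * a) • y) ((a * b) • y)
    have h2 := key2 0 (((b - a) * a) • y) ((a * b) • y)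
    rw [e_bs, e_ct] at h1 h2
    rw [show u + N • y - N • y = u by abel] at h1
    rw [show (0 : M) + N • y - N • y = 0 by abel,
        show (0 : M) + N • y = N • y by abel,
        show (0 : M) - N • y = -(N • y) by abel,
        hf2even (N • y), hf20] at h2
    rw [show u - N • y = u - N • y from rfl] at h1
    linarith [h1, h2]
  obtain ⟨lam1, hl1, hv1⟩ := aux_quad M f1 N hf1even hf10 hf1le par1
  obtain ⟨lam2, hl2, hv2⟩ := aux_quad M f2 N hf2even hf20 hf2le par2
  refine ⟨lam1, lam2, hl1, hl2, fun y => ⟨?_, ?_⟩⟩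
  · rw [← Real.exp_log (hpos1 (N • y)).1, ← hv1 y]
  · rw [← Real.exp_log (hpos2 (N • y)).1, ← hv2 y]
end
end

section
/- Let X = Σ_a be an a-adic solenoid. There exist relatively prime nonzero integers p and q such that f_p, f_q, f_{p+q}, f_{p−q} ∈ Aut(X) if and only if f_2 ∈ Aut(X) and f_3 ∈ Aut(X). -/
open MeasureTheory ProbabilityTheory

noncomputable section

/-! ### The a-adic integers and the a-adic solenoid -/

/-- `radix a n = a 0 * a 1 * ⋯ * a (n-1)`. -/
def radix (a : ℕ → ℕ) (n : ℕ) : ℕ := ∏ i ∈ Finset.range n, a i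

lemma radix_dvd_succ (a : ℕ → ℕ) (n : ℕ) : radix a n ∣ radix a (n + 1) := by
  rw [radix, radix, Finset.prod_range_succ]; exact dvd_mul_right _ _

instance (n : ℕ) : TopologicalSpace (ZMod n) := ⊥
instance (n : ℕ) : DiscreteTopology (ZMod n) := ⟨rfl⟩

/-- The group `Δ_a` of `a`-adic integers: sequences of digits `(x_0, x_1, …)`,
`0 ≤ x_n < a n`, with addition with carries.  It is realized here, in the standard
equivalent way, as the projective limit of the cyclic groups `ℤ/(a 0 ⋯ a n)ℤ`,
i.e. as the subgroup of the product `∀ n, ZMod (radix a (n+1))` (carrying the product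
topology, each factor being discrete) consisting of the compatible sequences:
the sequence of digits `(x_0, …, x_n)` corresponds to the residue
`x_0 + x_1 * a 0 + ⋯ + x_n * (a 0 * ⋯ * a (n-1))` modulo `a 0 * ⋯ * a n`. -/
def aAdicIntegers (a : ℕ → ℕ) : AddSubgroup (∀ n : ℕ, ZMod (radix a (n + 1))) where
  carrier := {x | ∀ n : ℕ,
    ZMod.castHom (radix_dvd_succ a (n + 1)) (ZMod (radix a (n + 1))) (x (n + 1)) = x n}
  zero_mem' := by intro n; simp
  add_mem' := by intro x y hx hy n; simp only [Pi.add_apply, map_add, hx n, hy n]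
  neg_mem' := by intro x hx n; simp only [Pi.neg_apply, map_neg, hx n]

/-- The element `u = (1, 0, 0, …)` of `Δ_a`, i.e. the `a`-adic integer `1`. -/
def aAdicOne (a : ℕ → ℕ) : aAdicIntegers a := ⟨fun _ => 1, fun _ => map_one _⟩

/-- The subgroup `B = {(n, n·u) : n ∈ ℤ}` of `ℝ × Δ_a`, where `u = (1, 0, 0, …)`. -/
def solenoidKernel (a : ℕ → ℕ) : AddSubgroup (ℝ × aAdicIntegers a) :=
  AddSubgroup.zmultiples ((1 : ℝ), aAdicOne a)

/-- The `a`-adic solenoid `Σ_a = (ℝ × Δ_a)/B`. -/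
abbrev Solenoid (a : ℕ → ℕ) : Type := (ℝ × aAdicIntegers a) ⧸ solenoidKernel a

instance (a : ℕ → ℕ) : MeasurableSpace (Solenoid a) := borel _
instance (a : ℕ → ℕ) : BorelSpace (Solenoid a) := ⟨rfl⟩

section AuxAut

variable {X : Type*} [AddCommGroup X] [TopologicalSpace X] [IsTopologicalAddGroup X]

lemma isTopAut_smul_of_mul (m k : ℤ) (h : IsTopAut (fun x : X => (m * k) • x)) :
    IsTopAut (fun x : X => m • x) := by
  obtain ⟨e, hec, hes, hef⟩ := h
  have hmk : ∀ x : X, e x = (m * k) • x := fun x => congrFun hef x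
  have hinj : Function.Injective (fun x : X => m • x) := by
    intro a b hab
    apply e.injective
    rw [hmk, hmk, mul_comm, mul_smul, mul_smul]
    exact congrArg (fun z => k • z) hab
  refine ⟨{ toFun := fun x => m • x
            invFun := fun y => k • e.symm y
            left_inv := ?_
            right_inv := ?_
            map_add' := fun x y => smul_add m x y },
          continuous_zsmul m, (continuous_zsmul k).comp hes, rfl⟩
  · intro x
    apply hinj
    show m • (k • e.symm (m • x)) = m • x
    rw [← mul_smul, ← hmk, e.apply_symm_apply]
  · intro y
    show m • (k • e.symm y) = y
    rw [← mul_smul, ← hmk, e.apply_symm_apply]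

lemma isTopAut_smul_mul (m k : ℤ) (hm : IsTopAut (fun x : X => m • x))
    (hk : IsTopAut (fun x : X => k • x)) : IsTopAut (fun x : X => (m * k) • x) := by
  obtain ⟨em, hmc, hms, hmf⟩ := hm
  obtain ⟨ek, hkc, hks, hkf⟩ := hk
  refine ⟨ek.trans em, hmc.comp hkc, hks.comp hms, funext fun x => ?_⟩
  calc em (ek x) = m • (ek x) := congrFun hmf _
    _ = m • (k • x) := by rw [congrFun hkf x]
    _ = (m * k) • x := (mul_smul m k x).symm

lemma isTopAut_smul_one : IsTopAut (fun x : X => (1 : ℤ) • x) :=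
  ⟨AddEquiv.refl X, continuous_id, continuous_id, funext fun x => (one_zsmul x).symm⟩

end AuxAut

/-- **Remark 3.** On an a-adic solenoid `X = Σ_a` there exist relatively prime nonzero
integers `p, q` with `f_p, f_q, f_{p+q}, f_{p−q} ∈ Aut(X)` if and only if
`f₂, f₃ ∈ Aut(X)`. -/
theorem solenoid_admissible_coefficients_iff
    (a : ℕ → ℕ) (ha : ∀ n, 1 < a n) :
    (∃ p q : ℤ, p ≠ 0 ∧ q ≠ 0 ∧ IsCoprime p q ∧
      IsTopAut (fun x : Solenoid a => p • x) ∧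
      IsTopAut (fun x : Solenoid a => q • x) ∧
      IsTopAut (fun x : Solenoid a => (p + q) • x) ∧
      IsTopAut (fun x : Solenoid a => (p - q) • x)) ↔
    (IsTopAut (fun x : Solenoid a => (2 : ℤ) • x) ∧
      IsTopAut (fun x : Solenoid a => (3 : ℤ) • x)) := by
  constructor
  · rintro ⟨p, q, -, -, -, hp, hq, hpq, hpmq⟩
    constructor
    · rcases (show (2 : ℤ) ∣ p ∨ 2 ∣ q ∨ 2 ∣ (p + q) by omega) with
        ⟨k, hk⟩ | ⟨k, hk⟩ | ⟨k, hk⟩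
      · exact isTopAut_smul_of_mul 2 k (hk ▸ hp)
      · exact isTopAut_smul_of_mul 2 k (hk ▸ hq)
      · exact isTopAut_smul_of_mul 2 k (hk ▸ hpq)
    · have key : (3 : ℤ) ∣ p ∨ 3 ∣ q ∨ 3 ∣ (p + q) ∨ 3 ∣ (p - q) := by
        have hp3 : p % 3 = 0 ∨ p % 3 = 1 ∨ p % 3 = 2 := by omega
        have hq3 : q % 3 = 0 ∨ q % 3 = 1 ∨ q % 3 = 2 := by omega
        rcases hp3 with h | h | h <;> rcases hq3 with h' | h' | h' <;> omega
      rcases key with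
        ⟨k, hk⟩ | ⟨k, hk⟩ | ⟨k, hk⟩ | ⟨k, hk⟩
      · exact isTopAut_smul_of_mul 3 k (hk ▸ hp)
      · exact isTopAut_smul_of_mul 3 k (hk ▸ hq)
      · exact isTopAut_smul_of_mul 3 k (hk ▸ hpq)
      · exact isTopAut_smul_of_mul 3 k (hk ▸ hpmq)
  · rintro ⟨h2, h3⟩
    refine ⟨3, 1, by norm_num, one_ne_zero, isCoprime_one_right, h3, isTopAut_smul_one,
      ?_, ?_⟩
    · have h4 := isTopAut_smul_mul 2 2 h2 h2
      have : (3 + 1 : ℤ) = 2 * 2 := by norm_num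
      rw [this]
      exact h4
    · have : (3 - 1 : ℤ) = 2 := by norm_num
      rw [this]
      exact h2
end
end

section
/- Let Y be an Abelian group, let ε_1, ε_2 be endomorphisms of Y, and let f, g : Y → ℂ be functions with f(0) = g(0) = 1 satisfying f(u + ε_1v)·g(u + ε_2v) = f(u − ε_1v)·g(u − ε_2v) for all u, v ∈ Y. Then f((ε_1+ε_2)t + 2ε_1s)·g(2ε_2t + (ε_1+ε_2)s) = f((ε_1+ε_2)t)·g(2ε_2t)·f(2ε_1s)·g((ε_1+ε_2)s) for all s, t ∈ Y. -/
noncomputable section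

/-- The key computation in Lemma 6: if `f, g : Y → ℂ` with `f(0) = g(0) = 1` satisfy
`f(u + ε₁v)·g(u + ε₂v) = f(u − ε₁v)·g(u − ε₂v)` for all `u, v ∈ Y`, where `ε₁, ε₂` are
endomorphisms of the Abelian group `Y`, then
`f((ε₁+ε₂)t + 2ε₁s)·g(2ε₂t + (ε₁+ε₂)s) = f((ε₁+ε₂)t)·g(2ε₂t)·f(2ε₁s)·g((ε₁+ε₂)s)`
for all `s, t ∈ Y`. -/
theorem symmetry_equation_implies_independence_equation
    {Y : Type*} [AddCommGroup Y] (ε1 ε2 : Y →+ Y) (f g : Y → ℂ)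
    (hf0 : f 0 = 1) (hg0 : g 0 = 1)
    (heq : ∀ u v : Y, f (u + ε1 v) * g (u + ε2 v) = f (u - ε1 v) * g (u - ε2 v)) :
    ∀ s t : Y,
      f ((ε1 t + ε2 t) + (ε1 s + ε1 s)) * g ((ε2 t + ε2 t) + (ε1 s + ε2 s)) =
      f (ε1 t + ε2 t) * g (ε2 t + ε2 t) * f (ε1 s + ε1 s) * g (ε1 s + ε2 s) := by
  intro s t
  have h1 := heq (ε1 s) s
  have h2 := heq (ε2 t) t
  have h3 := heq (ε1 s + ε2 t) (s + t)
  rw [sub_self, hf0, one_mul] at h1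
  rw [sub_self, hg0, mul_one] at h2
  rw [map_add, map_add,
    show ε1 s + ε2 t + (ε1 s + ε1 t) = (ε1 t + ε2 t) + (ε1 s + ε1 s) by abel,
    show ε1 s + ε2 t + (ε2 s + ε2 t) = (ε2 t + ε2 t) + (ε1 s + ε2 s) by abel,
    show ε1 s + ε2 t - (ε1 s + ε1 t) = ε2 t - ε1 t by abel,
    show ε1 s + ε2 t - (ε2 s + ε2 t) = ε1 s - ε2 s by abel] at h3
  rw [add_comm (ε2 t) (ε1 t)] at h2
  rw [h3, ← h1, ← h2]
  ring
end
end
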